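/- Let F be L-smooth on a convex compact set C with Euclidean diameter ρ̄, and suppose the iterates satisfy F(θ̄ₜ₊₁) ≤ F(θ̄ₜ) − γₜ gₜ + 2γₜρ̄(Δ_g,t + LΔ_p,t) + γₜ² Lρ̄²/2, where gₜ ≥ 0, γₜ = t^{−α} with α ∈ [1/2, 1), Δ_p,t = C_p t^{−α}, Δ_g,t = C_g t^{−α}, and F is G-Lipschitz so that F(θ̄_{T/2+1}) − F(θ̄_{T+1}) ≤ Gρ. Then for every even T ≥ 6, min_{t ∈ [T/2+1, T]} gₜ ≤ T^{α−1} · ((1−α)/(1−(2/3)^{1−α})) · (Gρ + (Lρ̄²/2 + 2ρ̄(C_g + LC_p))·log 2). -/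

import Mathlib

open scoped BigOperators

private lemma tele_sum (f : ℕ → ℝ) (a b : ℕ) (hab : a ≤ b) :
    ∑ i ∈ Finset.Ico a b, (f (i + 1) - f i) = f b - f a := by
  induction b, hab using Nat.le_induction with
  | base => simp
  | succ b hb ih =>
      rw [Finset.sum_Ico_succ_top (by omega), ih]; ring

private lemma sum_Icc_shift (h : ℕ → ℝ) (a b : ℕ) :
    ∑ t ∈ Finset.Icc (a + 1) b, h t = ∑ i ∈ Finset.Ico a b, h (i + 1) := by
  rw [← Finset.Ico_add_one_right_eq_Icc, ← Finset.map_add_right_Ico a b 1, Finset.sum_map]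
  rfl

private lemma rpow_diff_le (x p : ℝ) (hx : 1 ≤ x) (hp0 : 0 ≤ p) (hp1 : p ≤ 1) :
    (x + 1) ^ p - x ^ p ≤ p * x ^ (p - 1) := by
  have hx0 : (0 : ℝ) < x := lt_of_lt_of_le one_pos hx
  have hxe : x + 1 = x * (1 + 1 / x) := by field_simp
  have hber : (1 + 1 / x) ^ p ≤ 1 + p * (1 / x) :=
    rpow_one_add_le_one_add_mul_self (le_trans (by norm_num : (-1:ℝ) ≤ 0) (by positivity)) hp0 hp1
  have h1 : (x + 1) ^ p ≤ x ^ p * (1 + p * (1 / x)) := by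
    rw [hxe, Real.mul_rpow hx0.le (by positivity)]
    exact mul_le_mul_of_nonneg_left hber (Real.rpow_nonneg hx0.le p)
  have h2 : x ^ (p - 1) = x ^ p / x := by
    rw [Real.rpow_sub hx0, Real.rpow_one]
  rw [h2]
  have : x ^ p * (1 + p * (1 / x)) = x ^ p + p * (x ^ p / x) := by field_simp
  linarith [this ▸ h1]

/-- Non-convex rate (Theorem 2, case `α ∈ [1/2,1)`): the per-iteration descent
inequality for the inexact Frank-Wolfe step implies that the minimum duality gap over
`[T/2+1, T]` is `O(T^{α-1})` for every even `T ≥ 6`. Here `Φ t = F (θ̄ t)`. -/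
theorem stmt_4 (Φ g : ℕ → ℝ) (α L G ρ ρbar Cp Cg : ℝ)
    (hα : (1 : ℝ) / 2 ≤ α) (hα1 : α < 1)
    (hL : 0 ≤ L) (hG : 0 ≤ G) (hρ : 0 ≤ ρ) (hρbar : 0 ≤ ρbar) (hCp : 0 ≤ Cp) (hCg : 0 ≤ Cg)
    (hg : ∀ t, 0 ≤ g t)
    (hdesc : ∀ t : ℕ, 1 ≤ t → Φ (t + 1) ≤ Φ t - (t : ℝ) ^ (-α) * g t
        + 2 * (t : ℝ) ^ (-α) * ρbar * (Cg * (t : ℝ) ^ (-α) + L * (Cp * (t : ℝ) ^ (-α)))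
        + ((t : ℝ) ^ (-α)) ^ 2 * L * ρbar ^ 2 / 2)
    (T : ℕ) (hT : 6 ≤ T) (hTeven : Even T)
    (hlip : Φ (T / 2 + 1) - Φ (T + 1) ≤ G * ρ) :
    ∃ t ∈ Finset.Icc (T / 2 + 1) T,
      g t ≤ (T : ℝ) ^ (α - 1) * ((1 - α) / (1 - (2 / 3 : ℝ) ^ (1 - α)))
        * (G * ρ + (L * ρbar ^ 2 / 2 + 2 * ρbar * (Cg + L * Cp)) * Real.log 2) := by
  set a := T / 2 with ha
  have hdvd : 2 ∣ T := hTeven.two_dvd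
  have h2a : 2 * a = T := Nat.mul_div_cancel' hdvd
  have ha3 : 3 ≤ a := by omega
  set K : ℝ := L * ρbar ^ 2 / 2 + 2 * ρbar * (Cg + L * Cp) with hKdef
  have hK : 0 ≤ K := by positivity
  set p : ℝ := 1 - α with hpdef
  have hp0 : 0 < p := by simp only [hpdef]; linarith
  have hp1 : p ≤ 1 := by simp only [hpdef]; linarith
  set c : ℝ := (2 / 3 : ℝ) ^ (1 - α) with hcdef
  have hc1 : c < 1 := Real.rpow_lt_one (by norm_num) (by norm_num) (by linarith)
  have hT0 : (0 : ℝ) < (T : ℝ) := by positivity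
  have haT : (a : ℝ) * 2 = (T : ℝ) := by
    have := congrArg (Nat.cast : ℕ → ℝ) h2a
    push_cast at this; linarith
  have hlog2 : 0 ≤ Real.log 2 := Real.log_nonneg one_le_two
  -- Step A : sum of γ_t g_t bounded above
  have stepA : ∑ t ∈ Finset.Icc (a + 1) T, (t : ℝ) ^ (-α) * g t
      ≤ G * ρ + K * Real.log 2 := by
    have haTle : a ≤ T := by omega
    have h1 : ∑ t ∈ Finset.Icc (a + 1) T, (t : ℝ) ^ (-α) * g t
        ≤ ∑ t ∈ Finset.Icc (a + 1) T, ((Φ t - Φ (t + 1)) + K * ((t : ℝ) ^ (-α)) ^ 2) := by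
      refine Finset.sum_le_sum fun t ht => ?_
      have htm : a + 1 ≤ t := (Finset.mem_Icc.mp ht).1
      have hd := hdesc t (by omega)
      rw [hKdef]
      nlinarith [hd]
    have h2 : ∑ t ∈ Finset.Icc (a + 1) T, (Φ t - Φ (t + 1)) = Φ (a + 1) - Φ (T + 1) := by
      rw [sum_Icc_shift (fun t => Φ t - Φ (t + 1)) a T]
      have := tele_sum (fun i => -Φ (i + 1)) a T haTle
      have e : ∑ i ∈ Finset.Ico a T, (Φ (i + 1) - Φ (i + 1 + 1))
          = ∑ i ∈ Finset.Ico a T, (-Φ (i + 1 + 1) - -Φ (i + 1)) :=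
        Finset.sum_congr rfl fun i _ => by ring
      rw [e, this]
      ring
    have h3 : ∑ t ∈ Finset.Icc (a + 1) T, ((t : ℝ) ^ (-α)) ^ 2 ≤ Real.log 2 := by
      have hterm : ∀ i ∈ Finset.Ico a T,
          (((i : ℝ) + 1) ^ (-α)) ^ 2 ≤ Real.log ((i : ℝ) + 1) - Real.log (i : ℝ) := by
        intro i hi
        have hia : a ≤ i := (Finset.mem_Ico.mp hi).1
        have hi1 : (1 : ℝ) ≤ (i : ℝ) := by
          have : (1 : ℕ) ≤ i := by omega
          exact_mod_cast this
        have hi0 : (0 : ℝ) < (i : ℝ) := lt_of_lt_of_le one_pos hi1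
        have hx1 : (1 : ℝ) ≤ (i : ℝ) + 1 := by linarith
        have e1 : (((i : ℝ) + 1) ^ (-α)) ^ 2 = ((i : ℝ) + 1) ^ (-α + -α) := by
          rw [Real.rpow_add (by linarith : (0:ℝ) < (i:ℝ) + 1)]; ring
        have e2 : ((i : ℝ) + 1) ^ (-α + -α) ≤ ((i : ℝ) + 1) ^ (-1 : ℝ) :=
          Real.rpow_le_rpow_of_exponent_le hx1 (by linarith)
        have e3 : ((i : ℝ) + 1) ^ (-1 : ℝ) = 1 / ((i : ℝ) + 1) := by
          rw [Real.rpow_neg_one]; ring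
        have e4 : Real.log ((i : ℝ) / ((i : ℝ) + 1)) ≤ (i : ℝ) / ((i : ℝ) + 1) - 1 :=
          Real.log_le_sub_one_of_pos (by positivity)
        have e5 : Real.log ((i : ℝ) / ((i : ℝ) + 1))
            = Real.log (i : ℝ) - Real.log ((i : ℝ) + 1) :=
          Real.log_div (ne_of_gt hi0) (by linarith)
        have e6 : (i : ℝ) / ((i : ℝ) + 1) - 1 = -(1 / ((i : ℝ) + 1)) := by field_simp; ring
        rw [e1]
        calc ((i : ℝ) + 1) ^ (-α + -α) ≤ 1 / ((i : ℝ) + 1) := e3 ▸ e2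
          _ ≤ Real.log ((i : ℝ) + 1) - Real.log (i : ℝ) := by
              rw [e5, e6] at e4; linarith
      rw [sum_Icc_shift (fun t => ((t : ℝ) ^ (-α)) ^ 2) a T]
      push_cast
      calc ∑ i ∈ Finset.Ico a T, (((i : ℝ) + 1) ^ (-α)) ^ 2
          ≤ ∑ i ∈ Finset.Ico a T, (Real.log ((i : ℝ) + 1) - Real.log (i : ℝ)) := by
            exact Finset.sum_le_sum fun i hi => hterm i hi
        _ = Real.log (T : ℝ) - Real.log (a : ℝ) := by
            have := tele_sum (fun i => Real.log (i : ℝ)) a T haTle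
            rw [← this]
            exact Finset.sum_congr rfl fun i _ => by push_cast; ring_nf
        _ = Real.log 2 := by
            have ha0 : (a : ℝ) ≠ 0 := by positivity
            rw [← haT, Real.log_mul ha0 two_ne_zero]
            ring
    calc ∑ t ∈ Finset.Icc (a + 1) T, (t : ℝ) ^ (-α) * g t
        ≤ (Φ (a + 1) - Φ (T + 1)) + K * (∑ t ∈ Finset.Icc (a + 1) T, ((t : ℝ) ^ (-α)) ^ 2) := by
          rw [Finset.mul_sum]
          calc _ ≤ _ := h1
            _ = _ := by rw [Finset.sum_add_distrib, h2]
      _ ≤ G * ρ + K * Real.log 2 := by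
          have := mul_le_mul_of_nonneg_left h3 hK
          have hlip' : Φ (a + 1) - Φ (T + 1) ≤ G * ρ := hlip
          linarith
  -- Step B : lower bound on the sum of γ_t
  have stepB : (T : ℝ) ^ p * (1 - c) / p ≤ ∑ t ∈ Finset.Icc (a + 1) T, (t : ℝ) ^ (-α) := by
    have haTle : a ≤ T := by omega
    have h1 : ((T : ℝ) + 1) ^ p / p - ((a : ℝ) + 1) ^ p / p
        ≤ ∑ t ∈ Finset.Icc (a + 1) T, (t : ℝ) ^ (-α) := by
      rw [sum_Icc_shift (fun t => (t : ℝ) ^ (-α)) a T]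
      have := tele_sum (fun i => ((i : ℝ) + 1) ^ p / p) a T haTle
      rw [← this]
      refine Finset.sum_le_sum fun i hi => ?_
      have hia : a ≤ i := (Finset.mem_Ico.mp hi).1
      have hi1 : (1 : ℝ) ≤ (i : ℝ) + 1 := le_add_of_nonneg_left (Nat.cast_nonneg i)
      have key := rpow_diff_le ((i : ℝ) + 1) p hi1 hp0.le hp1
      have hpm : p - 1 = -α := by simp [hpdef]
      rw [hpm] at key
      have : (((i : ℝ) + 1) + 1) ^ p / p - ((i : ℝ) + 1) ^ p / p
          = ((((i : ℝ) + 1) + 1) ^ p - ((i : ℝ) + 1) ^ p) / p := by ring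
      push_cast
      rw [this]
      rw [div_le_iff₀ hp0]
      calc (((i : ℝ) + 1) + 1) ^ p - ((i : ℝ) + 1) ^ p ≤ p * ((i : ℝ) + 1) ^ (-α) := key
        _ = ((i : ℝ) + 1) ^ (-α) * p := by ring
    have h2 : (T : ℝ) ^ p ≤ ((T : ℝ) + 1) ^ p :=
      Real.rpow_le_rpow hT0.le (by linarith) hp0.le
    have h3 : ((a : ℝ) + 1) ^ p ≤ c * (T : ℝ) ^ p := by
      have hle : (a : ℝ) + 1 ≤ 2 / 3 * (T : ℝ) := by
        have hT6 : (6 : ℝ) ≤ (T : ℝ) := by exact_mod_cast hT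
        linarith [haT]
      calc ((a : ℝ) + 1) ^ p ≤ (2 / 3 * (T : ℝ)) ^ p :=
            Real.rpow_le_rpow (by positivity) hle hp0.le
        _ = c * (T : ℝ) ^ p := by
            rw [Real.mul_rpow (by norm_num) hT0.le]
    have h4 : (T : ℝ) ^ p * (1 - c) ≤ ((T : ℝ) + 1) ^ p - ((a : ℝ) + 1) ^ p := by
      have e : (T : ℝ) ^ p * (1 - c) = (T : ℝ) ^ p - c * (T : ℝ) ^ p := by ring
      rw [e]; linarith
    calc (T : ℝ) ^ p * (1 - c) / p
        ≤ (((T : ℝ) + 1) ^ p - ((a : ℝ) + 1) ^ p) / p := by gcongr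
      _ = ((T : ℝ) + 1) ^ p / p - ((a : ℝ) + 1) ^ p / p := by ring
      _ ≤ _ := h1
  -- Step C : pick the minimizer
  have hne : (Finset.Icc (a + 1) T).Nonempty := ⟨a + 1, by rw [Finset.mem_Icc]; omega⟩
  obtain ⟨t₀, ht₀, hmin⟩ := Finset.exists_min_image (Finset.Icc (a + 1) T) g hne
  refine ⟨t₀, ht₀, ?_⟩
  have hm0 : 0 ≤ g t₀ := hg t₀
  have hSlow : g t₀ * ((T : ℝ) ^ p * (1 - c) / p) ≤ G * ρ + K * Real.log 2 := by
    have h1 : g t₀ * (∑ t ∈ Finset.Icc (a + 1) T, (t : ℝ) ^ (-α))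
        ≤ ∑ t ∈ Finset.Icc (a + 1) T, (t : ℝ) ^ (-α) * g t := by
      rw [Finset.mul_sum]
      refine Finset.sum_le_sum fun t ht => ?_
      have := mul_le_mul_of_nonneg_left (hmin t ht) (Real.rpow_nonneg (Nat.cast_nonneg t) (-α))
      linarith
    have h2 := mul_le_mul_of_nonneg_left stepB hm0
    exact le_trans (le_trans h2 h1) stepA
  have hD : 0 < (T : ℝ) ^ p * (1 - c) / p := by
    have : (0:ℝ) < (T : ℝ) ^ p := Real.rpow_pos_of_pos hT0 p
    have : (0:ℝ) < (T : ℝ) ^ p * (1 - c) := by nlinarith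
    positivity
  have hc0 : (0:ℝ) < 1 - c := by linarith
  have hTprod : (T : ℝ) ^ (α - 1) * (T : ℝ) ^ p = 1 := by
    rw [← Real.rpow_add hT0, show α - 1 + p = 0 by rw [hpdef]; ring, Real.rpow_zero]
  have e2 : p / (1 - c) * ((1 - c) / p) = 1 := by
    rw [div_mul_div_comm, mul_comm (1 - c) p]
    exact div_self (mul_ne_zero (ne_of_gt hp0) (ne_of_gt hc0))
  have hfinal : g t₀ ≤ (G * ρ + K * Real.log 2) / ((T : ℝ) ^ p * (1 - c) / p) :=
    (le_div_iff₀ hD).mpr hSlow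
  have heq : (G * ρ + K * Real.log 2) / ((T : ℝ) ^ p * (1 - c) / p)
      = (T : ℝ) ^ (α - 1) * (p / (1 - c)) * (G * ρ + K * Real.log 2) := by
    rw [div_eq_iff (ne_of_gt hD)]
    calc G * ρ + K * Real.log 2 = 1 * 1 * (G * ρ + K * Real.log 2) := by ring
      _ = ((T : ℝ) ^ (α - 1) * (T : ℝ) ^ p) * (p / (1 - c) * ((1 - c) / p))
            * (G * ρ + K * Real.log 2) := by rw [hTprod, e2]
      _ = (T : ℝ) ^ (α - 1) * (p / (1 - c)) * (G * ρ + K * Real.log 2)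
            * ((T : ℝ) ^ p * (1 - c) / p) := by ring
  rw [heq] at hfinal
  exact hfinal
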